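/- Let u be a positive solution of the radial problem (30). Assume f(r,0)=0 and f_r(r,u) \le 0 for all r \in [0,1] and u > 0, and that u\, f_u(r,u) - (p-1) f(r,u) > 0 for all r \in [0,1] and u > 0. Then the function r \mapsto f(r,u(r)) changes sign at most once on (0,1): there exists r_2 \in (0,1] such that f(r,u(r)) > 0 for all r \in [0,r_2), and if r_2 < 1 then f(r,u(r)) < 0 for all r \in (r_2,1). -/

import Mathlib

open Set

/-- `φ_p(t) = t |t|^{p-2}` (real exponent), with `φ_p(0)=0`. -/
noncomputable def phi (p t : ℝ) : ℝ := t * |t| ^ (p - 2)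

/-- `φ_p'(t) = (p-1) |t|^{p-2}`. -/
noncomputable def phi' (p t : ℝ) : ℝ := (p - 1) * |t| ^ (p - 2)

/-- The derivative of a function on `[0,1]` (one-sided at the endpoints). -/
noncomputable def du (u : ℝ → ℝ) : ℝ → ℝ := derivWithin u (Set.Icc 0 1)

/-- A positive (classical) solution of the radial problem (30):
`(φ_p(u'))' + ((n-1)/r) φ_p(u') + f(r,u) = 0` on `(0,1)`, `u'(0) = u(1) = 0`,
with `u ∈ C^1[0,1]`, `φ_p ∘ u' ∈ C^1((0,1])`, and `u > 0` on `[0,1)`. -/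
structure RadialSol (p : ℝ) (n : ℕ) (f : ℝ → ℝ → ℝ) (u : ℝ → ℝ) : Prop where
  reg : ContDiffOn ℝ 1 u (Set.Icc 0 1)
  reg' : ContDiffOn ℝ 1 (fun r => phi p (du u r)) (Set.Ioc 0 1)
  pos : ∀ r ∈ Set.Ico (0:ℝ) 1, 0 < u r
  bc0 : du u 0 = 0
  bc1 : u 1 = 0
  ode : ∀ r ∈ Set.Ioo (0:ℝ) 1,
    deriv (fun s => phi p (du u s)) r + ((n : ℝ) - 1) / r * phi p (du u r) + f r (u r) = 0

/-- A solution of the linearized problem (31) at `u`: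
`(φ_p'(u') w')' + ((n-1)/r) φ_p'(u') w' + f_u(r,u) w = 0` on `(0,1)`, `w'(0) = w(1) = 0`. -/
structure LinSol (p : ℝ) (n : ℕ) (f : ℝ → ℝ → ℝ) (u w : ℝ → ℝ) : Prop where
  reg : ContDiffOn ℝ 1 w (Set.Icc 0 1)
  reg' : ContDiffOn ℝ 1 (fun r => phi' p (du u r) * du w r) (Set.Ioc 0 1)
  ode : ∀ r ∈ Set.Ioo (0:ℝ) 1,
    deriv (fun s => phi' p (du u s) * du w s) r
      + ((n : ℝ) - 1) / r * (phi' p (du u r) * du w r) + deriv (f r) (u r) * w r = 0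
  bc0 : du w 0 = 0
  bc1 : w 1 = 0

open Filter Topology

variable {p : ℝ}

lemma abs_phi (hp : 1 < p) (t : ℝ) : |phi p t| = |t| ^ (p - 1) := by
  rcases eq_or_ne t 0 with rfl | ht
  · simp [phi, Real.zero_rpow (by linarith : p - 1 ≠ 0)]
  · rw [phi, abs_mul, Real.abs_rpow_of_nonneg (abs_nonneg t), abs_abs,
      show |t| * |t|^(p-2) = |t|^(1:ℝ) * |t|^(p-2) by rw [Real.rpow_one],
      ← Real.rpow_add (abs_pos.2 ht)]
    congr 1; ring

lemma phi_mul_self (hp : 1 < p) (t : ℝ) : t * phi p t = |t| ^ p := by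
  rcases eq_or_ne t 0 with rfl | ht
  · simp [phi, Real.zero_rpow (by linarith : p ≠ 0)]
  · have : t * phi p t = |t|^(2:ℝ) * |t| ^ (p-2) := by
      rw [phi, ← mul_assoc]
      rw [show |t|^(2:ℝ) = t * t by
        rw [Real.rpow_two]; rcases abs_cases t with ⟨h,_⟩|⟨h,_⟩ <;> nlinarith [sq_abs t]]
    rw [this, ← Real.rpow_add (abs_pos.2 ht)]; norm_num

lemma phi_nonneg_mul (hp : 1 < p) (t : ℝ) : 0 ≤ t * phi p t := by
  rw [phi_mul_self hp]; positivity

lemma phi_neg_iff (hp : 1 < p) {t : ℝ} : phi p t < 0 ↔ t < 0 := by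
  rcases lt_trichotomy t 0 with h | rfl | h
  · simp only [h, iff_true]
    exact mul_neg_of_neg_of_pos h (Real.rpow_pos_of_pos (abs_pos.2 h.ne) _)
  · simp [phi]
  · simp only [h.not_gt, iff_false, not_lt, phi]
    positivity

lemma phi_zero : phi p 0 = 0 := by simp [phi]

lemma continuous_phi (hp : 1 < p) : Continuous (phi p) := by
  rw [continuous_iff_continuousAt]
  intro t
  rcases eq_or_ne t 0 with rfl | ht
  · rw [ContinuousAt, phi_zero]
    apply squeeze_zero_norm (fun x => (abs_phi hp x).le)
    have : ContinuousAt (fun x : ℝ => |x| ^ (p-1)) 0 :=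
      (Real.continuousAt_rpow_const _ _ (by right; linarith)).comp continuous_abs.continuousAt
    simpa [Real.zero_rpow (by linarith : p - 1 ≠ 0)] using this.tendsto
  · exact continuousAt_id.mul
      ((Real.continuousAt_rpow_const _ _ (Or.inl (abs_ne_zero.2 ht))).comp
        continuous_abs.continuousAt)

lemma phi_phi (hp : 1 < p) (t : ℝ) : phi (p/(p-1)) (phi p t) = t := by
  rcases eq_or_ne t 0 with rfl | ht
  · simp [phi]
  · have hp1 : (0:ℝ) < p - 1 := by linarith
    have habs : (0:ℝ) < |t| := abs_pos.2 ht
    rw [phi, abs_phi hp, phi, ← Real.rpow_mul (abs_nonneg t), mul_assoc,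
      ← Real.rpow_add habs,
      show p - 2 + (p-1) * (p/(p-1) - 2) = 0 by field_simp; ring,
      Real.rpow_zero, mul_one]

-- K derivative building block:
lemma hasDerivAt_weight (hq : 1 < p) (y : ℝ) :
    HasDerivAt (fun y : ℝ => (1/p) * |y| ^ p) (phi p y) y := by
  have : HasDerivAt (fun y : ℝ => (1/p) * |y| ^ p) _ y := (hasDerivAt_abs_rpow y hq).const_mul (1/p)
  convert this using 1
  have hp0 : p ≠ 0 := by linarith
  rw [phi]; field_simp

section Slice
variable {f : ℝ → ℝ → ℝ}

lemma hasDerivAt_slice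
    (hf : ContDiffOn ℝ 1 (fun z : ℝ × ℝ => f z.1 z.2) (Set.Icc 0 1 ×ˢ Set.Ici 0))
    {r v : ℝ} (hr : r ∈ Icc (0:ℝ) 1) (hv : 0 < v) :
    HasDerivAt (f r) (deriv (f r) v) v := by
  have h1 : DifferentiableWithinAt ℝ (fun z : ℝ × ℝ => f z.1 z.2)
      (Set.Icc 0 1 ×ˢ Set.Ici 0) (r, v) :=
    (hf.differentiableOn one_ne_zero) _ ⟨hr, hv.le⟩
  have h2 : DifferentiableWithinAt ℝ (fun t : ℝ => ((r, t) : ℝ × ℝ)) (Ici 0) v :=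
    ((differentiableAt_const r).prodMk differentiableAt_id).differentiableWithinAt
  have h3 := h1.comp v h2 (fun t ht => ⟨hr, ht⟩)
  have h4 : DifferentiableAt ℝ (f r) v := by
    have := h3.differentiableAt (Ici_mem_nhds hv)
    exact this
  exact h4.hasDerivAt

lemma f_antitone
    (hf : ContDiffOn ℝ 1 (fun z : ℝ × ℝ => f z.1 z.2) (Set.Icc 0 1 ×ˢ Set.Ici 0))
    (hf0 : ∀ r ∈ Set.Icc (0:ℝ) 1, f r 0 = 0)
    (hfr : ∀ r ∈ Set.Icc (0:ℝ) 1, ∀ v > (0:ℝ), deriv (fun s => f s v) r ≤ 0)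
    {v : ℝ} (hv : 0 ≤ v) : AntitoneOn (fun r => f r v) (Icc (0:ℝ) 1) := by
  rcases eq_or_lt_of_le hv with rfl | hv
  · intro a ha b hb _
    show f b 0 ≤ f a 0
    rw [hf0 a ha, hf0 b hb]
  · apply antitoneOn_of_deriv_nonpos (convex_Icc 0 1)
    · exact hf.continuousOn.comp (continuousOn_id.prodMk continuousOn_const)
        (fun r hr => ⟨hr, hv.le⟩)
    · rw [interior_Icc]
      intro r hr
      have hmem : (Set.Icc 0 1 ×ˢ Set.Ici 0 : Set (ℝ × ℝ)) ∈ 𝓝 ((r, v) : ℝ × ℝ) := by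
        apply mem_nhds_iff.2
        exact ⟨Ioo 0 1 ×ˢ Ioi 0, Set.prod_mono Ioo_subset_Icc_self Ioi_subset_Ici_self,
          (isOpen_Ioo.prod isOpen_Ioi), ⟨hr, hv⟩⟩
      have hA : DifferentiableAt ℝ (fun z : ℝ × ℝ => f z.1 z.2) (r, v) :=
        ((hf.differentiableOn one_ne_zero) (r,v) ⟨Ioo_subset_Icc_self hr, mem_Ici.2 hv.le⟩).differentiableAt hmem
      exact (hA.comp r (differentiableAt_id.prodMk (differentiableAt_const v) : DifferentiableAt ℝ (fun x : ℝ => (x, v)) r)).differentiableWithinAt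
    · rw [interior_Icc]
      intro r hr
      exact hfr r (Ioo_subset_Icc_self hr) v hv

lemma ratio_strictMono (hp : 1 < p)
    (hf : ContDiffOn ℝ 1 (fun z : ℝ × ℝ => f z.1 z.2) (Set.Icc 0 1 ×ˢ Set.Ici 0))
    (h22 : ∀ r ∈ Set.Icc (0:ℝ) 1, ∀ v > (0:ℝ), 0 < v * deriv (f r) v - (p - 1) * f r v)
    {r : ℝ} (hr : r ∈ Icc (0:ℝ) 1) :
    StrictMonoOn (fun v => f r v * v ^ (1-p)) (Ioi (0:ℝ)) := by
  apply strictMonoOn_of_deriv_pos (convex_Ioi 0)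
  · exact continuousOn_of_forall_continuousAt (fun v hv =>
      ((hasDerivAt_slice hf hr hv).continuousAt).mul
        ((Real.continuousAt_rpow_const v (1-p) (Or.inl (ne_of_gt hv)))))
  · rw [interior_Ioi]
    intro v hv
    have h1 := hasDerivAt_slice hf hr hv
    have h2 : HasDerivAt (fun v : ℝ => v ^ (1-p)) ((1-p) * v ^ (1-p-1)) v :=
      Real.hasDerivAt_rpow_const (Or.inl (ne_of_gt hv))
    rw [HasDerivAt.deriv (f := fun v => f r v * v ^ (1-p)) (h1.mul h2)]
    have key := h22 r hr v hv
    have hv1 : v ^ (1-p) = v ^ (1-p-1) * v := by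
      rw [← Real.rpow_add_one (ne_of_gt hv)]; ring_nf
    have hw : 0 < v ^ (1-p-1) := Real.rpow_pos_of_pos hv _
    rw [hv1]
    nlinarith

lemma f_neg_below (hp : 1 < p)
    (hf : ContDiffOn ℝ 1 (fun z : ℝ × ℝ => f z.1 z.2) (Set.Icc 0 1 ×ˢ Set.Ici 0))
    (h22 : ∀ r ∈ Set.Icc (0:ℝ) 1, ∀ v > (0:ℝ), 0 < v * deriv (f r) v - (p - 1) * f r v)
    {r v₁ v₂ : ℝ} (hr : r ∈ Icc (0:ℝ) 1) (h2 : f r v₂ ≤ 0) (h01 : 0 < v₁)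
    (h12 : v₁ < v₂) : f r v₁ < 0 := by
  have hmono := ratio_strictMono hp hf h22 hr h01 (h01.trans h12) h12
  have hw1 : (0:ℝ) < v₁ ^ (1-p) := Real.rpow_pos_of_pos h01 _
  have hw2 : (0:ℝ) < v₂ ^ (1-p) := Real.rpow_pos_of_pos (h01.trans h12) _
  have h3 : f r v₂ * v₂ ^ (1-p) ≤ 0 := mul_nonpos_iff.2 (Or.inr ⟨h2, hw2.le⟩)
  simp only [] at hmono
  by_contra hcon
  push_neg at hcon
  nlinarith [mul_nonneg hcon hw1.le]

end Slice

section Sol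
variable {n : ℕ} {f : ℝ → ℝ → ℝ} {u : ℝ → ℝ}

lemma Ucont (hu : RadialSol p n f u) : ContinuousOn (du u) (Icc 0 1) :=
  hu.reg.continuousOn_derivWithin (uniqueDiffOn_Icc one_pos) le_rfl

lemma ucont (hu : RadialSol p n f u) : ContinuousOn u (Icc 0 1) := hu.reg.continuousOn

lemma unonneg (hu : RadialSol p n f u) : ∀ r ∈ Icc (0:ℝ) 1, 0 ≤ u r := by
  intro r hr
  rcases eq_or_lt_of_le hr.2 with rfl | h
  · exact hu.bc1.ge
  · exact (hu.pos r ⟨hr.1, h⟩).le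

lemma hasDerivAt_u (hu : RadialSol p n f u) {r : ℝ} (hr : r ∈ Ioo (0:ℝ) 1) :
    HasDerivAt u (du u r) r := by
  have h1 : Icc (0:ℝ) 1 ∈ 𝓝 r := Icc_mem_nhds hr.1 hr.2
  have h2 := (hu.reg.differentiableOn one_ne_zero) r ⟨hr.1.le, hr.2.le⟩
  have h3 := h2.differentiableAt h1
  have : du u r = deriv u r := derivWithin_of_mem_nhds h1
  rw [this]
  exact h3.hasDerivAt

lemma hasDerivAt_psi (hu : RadialSol p n f u) {r : ℝ} (hr : r ∈ Ioo (0:ℝ) 1) :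
    HasDerivAt (fun s => phi p (du u s)) (deriv (fun s => phi p (du u s)) r) r := by
  have h1 : Ioc (0:ℝ) 1 ∈ 𝓝 r := mem_nhds_iff.2 ⟨Ioo 0 1, Ioo_subset_Ioc_self, isOpen_Ioo, hr⟩
  exact (((hu.reg'.differentiableOn one_ne_zero) r ⟨hr.1, hr.2.le⟩).differentiableAt h1).hasDerivAt

lemma deriv_psi_eq (hu : RadialSol p n f u) {r : ℝ} (hr : r ∈ Ioo (0:ℝ) 1) :
    deriv (fun s => phi p (du u s)) r
      = -(((n:ℝ)-1)/r * phi p (du u r)) - f r (u r) := by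
  have := hu.ode r hr; linarith

lemma gcont (hf : ContDiffOn ℝ 1 (fun z : ℝ × ℝ => f z.1 z.2) (Set.Icc 0 1 ×ˢ Set.Ici 0))
    (hu : RadialSol p n f u) : ContinuousOn (fun r => f r (u r)) (Icc (0:ℝ) 1) :=
  hf.continuousOn.comp (continuousOn_id.prodMk (ucont hu)) (fun r hr => ⟨hr, unonneg hu r hr⟩)

end Sol

noncomputable def Fint (f : ℝ → ℝ → ℝ) (r v : ℝ) : ℝ := ∫ t in (0:ℝ)..v, f r t

section FF
variable {f : ℝ → ℝ → ℝ}

lemma f_cont_slice (hf : ContDiffOn ℝ 1 (fun z : ℝ × ℝ => f z.1 z.2) (Set.Icc 0 1 ×ˢ Set.Ici 0))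
    {r : ℝ} (hr : r ∈ Icc (0:ℝ) 1) : ContinuousOn (f r) (Ici 0) :=
  hf.continuousOn.comp (continuousOn_const.prodMk continuousOn_id) (fun t ht => ⟨hr, ht⟩)

lemma f_intable (hf : ContDiffOn ℝ 1 (fun z : ℝ × ℝ => f z.1 z.2) (Set.Icc 0 1 ×ˢ Set.Ici 0))
    {r v : ℝ} (hr : r ∈ Icc (0:ℝ) 1) (hv : 0 ≤ v) :
    IntervalIntegrable (f r) MeasureTheory.volume 0 v := by
  apply ContinuousOn.intervalIntegrable
  rw [uIcc_of_le hv]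
  exact (f_cont_slice hf hr).mono (fun t ht => ht.1)

lemma Fint_hasDeriv (hf : ContDiffOn ℝ 1 (fun z : ℝ × ℝ => f z.1 z.2) (Set.Icc 0 1 ×ˢ Set.Ici 0))
    {r v : ℝ} (hr : r ∈ Icc (0:ℝ) 1) (hv : 0 < v) :
    HasDerivAt (Fint f r) (f r v) v := by
  apply intervalIntegral.integral_hasDerivAt_right (f_intable hf hr hv.le)
  · exact ((f_cont_slice hf hr).mono Ioi_subset_Ici_self).stronglyMeasurableAtFilter
      isOpen_Ioi v hv
  · exact ((f_cont_slice hf hr) v hv.le).continuousAt (Ici_mem_nhds hv)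

lemma Fint_antitone (hf : ContDiffOn ℝ 1 (fun z : ℝ × ℝ => f z.1 z.2) (Set.Icc 0 1 ×ˢ Set.Ici 0))
    (hf0 : ∀ r ∈ Set.Icc (0:ℝ) 1, f r 0 = 0)
    (hfr : ∀ r ∈ Set.Icc (0:ℝ) 1, ∀ v > (0:ℝ), deriv (fun s => f s v) r ≤ 0)
    {v : ℝ} (hv : 0 ≤ v) {r₁ r₂ : ℝ} (h1 : r₁ ∈ Icc (0:ℝ) 1) (h2 : r₂ ∈ Icc (0:ℝ) 1)
    (h12 : r₁ ≤ r₂) : Fint f r₂ v ≤ Fint f r₁ v := by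
  apply intervalIntegral.integral_mono_on hv (f_intable hf h2 hv) (f_intable hf h1 hv)
  intro t ht
  exact f_antitone hf hf0 hfr ht.1 h1 h2 h12

lemma Fint_neg (hp : 1 < p)
    (hf : ContDiffOn ℝ 1 (fun z : ℝ × ℝ => f z.1 z.2) (Set.Icc 0 1 ×ˢ Set.Ici 0))
    (h22 : ∀ r ∈ Set.Icc (0:ℝ) 1, ∀ v > (0:ℝ), 0 < v * deriv (f r) v - (p - 1) * f r v)
    {r v : ℝ} (hr : r ∈ Icc (0:ℝ) 1) (hv : 0 < v) (hneg : f r v ≤ 0) :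
    Fint f r v < 0 := by
  have hpos : 0 < ∫ t in (0:ℝ)..v, (-(f r t)) := by
    apply intervalIntegral.intervalIntegral_pos_of_pos_on ((f_intable hf hr hv.le).neg)
    · intro t ht
      have := f_neg_below hp hf h22 hr hneg ht.1 ht.2
      simp only [Pi.neg_apply]
      linarith
    · exact hv
  rw [intervalIntegral.integral_neg] at hpos
  rw [Fint]; linarith

lemma Fint_continuousOn
    (hf : ContDiffOn ℝ 1 (fun z : ℝ × ℝ => f z.1 z.2) (Set.Icc 0 1 ×ˢ Set.Ici 0))
    {r B : ℝ} (hr : r ∈ Icc (0:ℝ) 1) (hB : 0 ≤ B) :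
    ContinuousOn (Fint f r) (Icc 0 B) := by
  have h1 : MeasureTheory.IntegrableOn (f r) (uIcc 0 B) MeasureTheory.volume := by
    rw [uIcc_of_le hB]
    exact ((f_cont_slice hf hr).mono (fun t ht => ht.1)).integrableOn_compact isCompact_Icc
  have := intervalIntegral.continuousOn_primitive_interval h1
  rw [uIcc_of_le hB] at this
  exact this

end FF

lemma abs_phi_rpow (hp : 1 < p) (t : ℝ) : |phi p t| ^ (p/(p-1)) = |t| ^ p := by
  rw [abs_phi hp, ← Real.rpow_mul (abs_nonneg t)]
  congr 1
  have h1 : p - 1 ≠ 0 := by linarith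
  field_simp

noncomputable def EE (p : ℝ) (f : ℝ → ℝ → ℝ) (u : ℝ → ℝ) (r : ℝ) : ℝ :=
  ((p-1)/p) * |du u r| ^ p + Fint f r (u r)

section Energy
variable {n : ℕ} {f : ℝ → ℝ → ℝ} {u : ℝ → ℝ}

lemma K_hasDeriv (hp : 1 < p) (hu : RadialSol p n f u) {r : ℝ} (hr : r ∈ Ioo (0:ℝ) 1) :
    HasDerivAt (fun s => ((p-1)/p) * |du u s| ^ p)
      (du u r * deriv (fun s => phi p (du u s)) r) r := by
  have hp1 : (0:ℝ) < p - 1 := by linarith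
  set q := p/(p-1) with hqdef
  have hq : 1 < q := (one_lt_div hp1).2 (by linarith)
  have hψ := hasDerivAt_psi hu hr
  have hA := (hasDerivAt_weight hq (phi p (du u r))).comp r hψ
  have heq : (fun s => (1/q) * |phi p (du u s)| ^ q)
      = (fun s => ((p-1)/p) * |du u s| ^ p) := by
    funext s
    rw [hqdef, abs_phi_rpow hp]
    congr 1
    field_simp
  rw [phi_phi hp] at hA
  rw [← heq]
  exact hA

lemma K_contOn (hp : 1 < p) (hu : RadialSol p n f u) :
    ContinuousOn (fun s => ((p-1)/p) * |du u s| ^ p) (Icc (0:ℝ) 1) := by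
  apply continuousOn_const.mul
  apply ContinuousOn.rpow_const (Ucont hu).abs
  intro x _
  right; linarith

lemma Phi_hasDeriv (hp : 1 < p)
    (hf : ContDiffOn ℝ 1 (fun z : ℝ × ℝ => f z.1 z.2) (Set.Icc 0 1 ×ˢ Set.Ici 0))
    (hu : RadialSol p n f u) {s r : ℝ} (hs : s ∈ Icc (0:ℝ) 1) (hr : r ∈ Ioo (0:ℝ) 1) :
    HasDerivAt (fun t => ((p-1)/p) * |du u t| ^ p + Fint f s (u t))
      (du u r * deriv (fun t => phi p (du u t)) r + f s (u r) * du u r) r :=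
  (K_hasDeriv hp hu hr).add
    ((Fint_hasDeriv hf hs (hu.pos r ⟨hr.1.le, hr.2⟩)).comp r (hasDerivAt_u hu hr))

lemma EE_mono (hp : 1 < p) (hn : 1 ≤ n)
    (hf : ContDiffOn ℝ 1 (fun z : ℝ × ℝ => f z.1 z.2) (Set.Icc 0 1 ×ˢ Set.Ici 0))
    (hf0 : ∀ r ∈ Set.Icc (0:ℝ) 1, f r 0 = 0)
    (hfr : ∀ r ∈ Set.Icc (0:ℝ) 1, ∀ v > (0:ℝ), deriv (fun s => f s v) r ≤ 0)
    (hu : RadialSol p n f u) {a b : ℝ} (h0a : 0 < a) (hab : a ≤ b) (hb1 : b ≤ 1) :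
    EE p f u b ≤ EE p f u a := by
  -- bound for u
  obtain ⟨c, hc, hmax⟩ := isCompact_Icc.exists_isMaxOn (f := u)
    (nonempty_Icc.2 zero_le_one) (ucont hu)
  have hsub : Icc a b ⊆ Icc (0:ℝ) 1 := Icc_subset_Icc h0a.le hb1
  have humem : ∀ r ∈ Icc (0:ℝ) 1, u r ∈ Icc (0:ℝ) (u c) :=
    fun r hr => ⟨unonneg hu r hr, hmax hr⟩
  have huc : 0 ≤ u c := unonneg hu c hc
  -- continuity of comparison functions
  have hkcont : ∀ s ∈ Icc (0:ℝ) 1,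
      ContinuousOn (fun t => ((p-1)/p) * |du u t| ^ p + Fint f s (u t)) (Icc (0:ℝ) 1) :=
    fun s hs => (K_contOn hp hu).add
      (((Fint_continuousOn hf hs huc).comp (ucont hu) humem))
  suffices H : ∀ ε > (0:ℝ), EE p f u b ≤ EE p f u a + ε * (b - a) by
    by_contra hcon
    push_neg at hcon
    rcases eq_or_lt_of_le hab with rfl | hab'
    · simp at hcon
    · have hba : 0 < b - a := by linarith
      have h1 := H ((EE p f u b - EE p f u a) / (2 * (b - a)))
        (div_pos (by linarith) (by linarith))
      have h2 : (EE p f u b - EE p f u a) / (2 * (b - a)) * (b - a)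
          = (EE p f u b - EE p f u a) / 2 := by
        field_simp
      rw [h2] at h1
      linarith
  intro ε hε
  set A := {r ∈ Icc a b | EE p f u r ≤ EE p f u a + ε * (r - a)} with hA
  have haA : a ∈ A := ⟨left_mem_Icc.2 hab, by simp⟩
  have hane : A.Nonempty := ⟨a, haA⟩
  have hbdd : BddAbove A := ⟨b, fun x hx => hx.1.2⟩
  set s := sSup A with hsdef
  have hsmem : s ∈ Icc a b := ⟨le_csSup hbdd haA, csSup_le hane (fun x hx => hx.1.2)⟩
  have hs01 : s ∈ Icc (0:ℝ) 1 := hsub hsmem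
  have hscl : s ∈ closure A := csSup_mem_closure hane hbdd
  have hne : (𝓝[A] s).NeBot := mem_closure_iff_nhdsWithin_neBot.1 hscl
  -- s ∈ A
  have hsA : EE p f u s ≤ EE p f u a + ε * (s - a) := by
    set k := fun t => ((p-1)/p) * |du u t| ^ p + Fint f s (u t) with hk
    have hkle : ∀ r ∈ A, k r ≤ EE p f u a + ε * (r - a) := by
      intro r hr
      have hrs : r ≤ s := le_csSup hbdd hr
      have : Fint f s (u r) ≤ Fint f r (u r) :=
        Fint_antitone hf hf0 hfr (unonneg hu r (hsub hr.1)) (hsub hr.1) hs01 hrs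
      calc k r ≤ EE p f u r := by rw [hk]; simp only [EE]; linarith
        _ ≤ EE p f u a + ε * (r - a) := hr.2
    have hkt : Filter.Tendsto k (𝓝[A] s) (𝓝 (k s)) := by
      have : ContinuousWithinAt k A s :=
        ((hkcont s hs01) s hs01).mono (fun x hx => hsub hx.1)
      exact this
    have hlt : Filter.Tendsto (fun r => EE p f u a + ε * (r - a)) (𝓝[A] s)
        (𝓝 (EE p f u a + ε * (s - a))) := by
      apply Filter.Tendsto.mono_left _ nhdsWithin_le_nhds
      exact (continuous_const.add (continuous_const.mul
        (continuous_id.sub continuous_const))).tendsto s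
    have := le_of_tendsto_of_tendsto hkt hlt
      (Filter.eventually_iff_exists_mem.2 ⟨A, self_mem_nhdsWithin, hkle⟩)
    exact this
  rcases eq_or_lt_of_le hsmem.2 with heq | hlt
  · rw [← heq]; exact hsA
  · exfalso
    have hs0 : 0 < s := lt_of_lt_of_le h0a hsmem.1
    have hsIoo : s ∈ Ioo (0:ℝ) 1 := ⟨hs0, lt_of_lt_of_le hlt hb1⟩
    have hΦ := Phi_hasDeriv hp hf hu hs01 hsIoo
    set d := du u s * deriv (fun t => phi p (du u t)) s + f s (u s) * du u s with hd
    have hdle : d ≤ 0 := by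
      have hder := deriv_psi_eq hu hsIoo
      have hmul := phi_mul_self hp (du u s)
      have : d = -(((n:ℝ)-1)/s * |du u s| ^ p) := by
        rw [hd, hder, ← hmul]; ring
      rw [this]
      have h1 : (0:ℝ) ≤ (n:ℝ) - 1 := by
        have : (1:ℝ) ≤ (n:ℝ) := by exact_mod_cast hn
        linarith
      have h2 : (0:ℝ) ≤ |du u s| ^ p := Real.rpow_nonneg (abs_nonneg _) p
      have := mul_nonneg (div_nonneg h1 hs0.le) h2
      linarith
    -- slope eventually < ε to the right
    have hslope := hasDerivAt_iff_tendsto_slope.1 hΦ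
    have hev : ∀ᶠ r in 𝓝[>] s, slope (fun t => ((p-1)/p) * |du u t| ^ p + Fint f s (u t)) s r < ε := by
      have h := (tendsto_order.1 hslope).2 ε (lt_of_le_of_lt hdle hε)
      exact h.filter_mono (nhdsWithin_mono s (fun x hx => ne_of_gt hx))
    have hmem2 : Ioo s b ∈ 𝓝[>] s := Ioo_mem_nhdsGT_of_mem ⟨le_refl s, hlt⟩
    obtain ⟨r, hr1, hr2⟩ := (hev.and (Filter.eventually_iff_exists_mem.2
      ⟨Ioo s b, hmem2, fun x hx => hx⟩)).exists
    obtain ⟨hsr, hrb⟩ := hr2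
    have hrIcc : r ∈ Icc (0:ℝ) 1 := ⟨by linarith [hs0], by linarith [hb1]⟩
    rw [slope_def_field] at hr1
    have hrs : 0 < r - s := by linarith
    have hΦr : ((p-1)/p) * |du u r| ^ p + Fint f s (u r)
        < ((p-1)/p) * |du u s| ^ p + Fint f s (u s) + ε * (r - s) := by
      have := (div_lt_iff₀ hrs).1 hr1
      linarith
    have hEr : EE p f u r ≤ ((p-1)/p) * |du u r| ^ p + Fint f s (u r) := by
      have : Fint f r (u r) ≤ Fint f s (u r) :=
        Fint_antitone hf hf0 hfr (unonneg hu r hrIcc) hs01 hrIcc hsr.le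
      simp only [EE]; linarith
    have hrA : r ∈ A := by
      refine ⟨⟨by linarith [hsmem.1], hrb.le⟩, ?_⟩
      have : ((p-1)/p) * |du u s| ^ p + Fint f s (u s) = EE p f u s := rfl
      rw [this] at hΦr
      have := hsA
      nlinarith [hΦr, hEr]
    have : r ≤ s := le_csSup hbdd hrA
    linarith

end Energy

section Crit
variable {n : ℕ} {f : ℝ → ℝ → ℝ} {u : ℝ → ℝ}

lemma EE_one_nonneg (hp : 1 < p)
    (hu : RadialSol p n f u) : 0 ≤ EE p f u 1 := by
  rw [EE, hu.bc1, Fint, intervalIntegral.integral_same, add_zero]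
  have := Real.rpow_nonneg (abs_nonneg (du u 1)) p
  have hpp : 0 ≤ (p-1)/p := by
    apply div_nonneg <;> linarith
  positivity

lemma no_crit (hp : 1 < p) (hn : 1 ≤ n)
    (hf : ContDiffOn ℝ 1 (fun z : ℝ × ℝ => f z.1 z.2) (Set.Icc 0 1 ×ˢ Set.Ici 0))
    (hf0 : ∀ r ∈ Set.Icc (0:ℝ) 1, f r 0 = 0)
    (hfr : ∀ r ∈ Set.Icc (0:ℝ) 1, ∀ v > (0:ℝ), deriv (fun s => f s v) r ≤ 0)
    (h22 : ∀ r ∈ Set.Icc (0:ℝ) 1, ∀ v > (0:ℝ), 0 < v * deriv (f r) v - (p - 1) * f r v)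
    (hu : RadialSol p n f u) {ξ : ℝ} (hξ : ξ ∈ Ioo (0:ℝ) 1) (hU : du u ξ = 0)
    (hfneg : f ξ (u ξ) ≤ 0) : False := by
  have hξIcc : ξ ∈ Icc (0:ℝ) 1 := ⟨hξ.1.le, hξ.2.le⟩
  have huξ : 0 < u ξ := hu.pos ξ ⟨hξ.1.le, hξ.2⟩
  have h1 : EE p f u ξ < 0 := by
    rw [EE, hU]
    have : |(0:ℝ)| ^ p = 0 := by
      rw [abs_zero]; exact Real.zero_rpow (by linarith)
    rw [this, mul_zero, zero_add]
    exact Fint_neg hp hf h22 hξIcc huξ hfneg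
  have h2 := EE_one_nonneg hp hu
  have h3 := EE_mono hp hn hf hf0 hfr hu hξ.1 hξ.2.le le_rfl
  linarith

lemma g0_pos (hp : 1 < p) (hn : 1 ≤ n)
    (hf : ContDiffOn ℝ 1 (fun z : ℝ × ℝ => f z.1 z.2) (Set.Icc 0 1 ×ˢ Set.Ici 0))
    (hf0 : ∀ r ∈ Set.Icc (0:ℝ) 1, f r 0 = 0)
    (hfr : ∀ r ∈ Set.Icc (0:ℝ) 1, ∀ v > (0:ℝ), deriv (fun s => f s v) r ≤ 0)
    (h22 : ∀ r ∈ Set.Icc (0:ℝ) 1, ∀ v > (0:ℝ), 0 < v * deriv (f r) v - (p - 1) * f r v)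
    (hu : RadialSol p n f u) : 0 < f 0 (u 0) := by
  by_contra hcon
  push_neg at hcon
  have h0Icc : (0:ℝ) ∈ Icc (0:ℝ) 1 := ⟨le_rfl, zero_le_one⟩
  have hu0 : 0 < u 0 := hu.pos 0 ⟨le_rfl, one_pos⟩
  -- the comparison function k at s = 0
  obtain ⟨c, hc, hmax⟩ := isCompact_Icc.exists_isMaxOn (f := u)
    (nonempty_Icc.2 zero_le_one) (ucont hu)
  have huc : 0 ≤ u c := unonneg hu c hc
  set k := fun t => ((p-1)/p) * |du u t| ^ p + Fint f 0 (u t) with hk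
  have hkcont : ContinuousOn k (Icc (0:ℝ) 1) :=
    (K_contOn hp hu).add ((Fint_continuousOn hf h0Icc huc).comp (ucont hu)
      (fun r hr => ⟨unonneg hu r hr, hmax hr⟩))
  have hk0 : k 0 < 0 := by
    rw [hk]
    simp only []
    rw [hu.bc0]
    have : |(0:ℝ)| ^ p = 0 := by
      rw [abs_zero]; exact Real.zero_rpow (by linarith)
    rw [this, mul_zero, zero_add]
    exact Fint_neg hp hf h22 h0Icc hu0 hcon
  -- find s ∈ (0,1) with k s < 0
  have hne : (𝓝[Ioo (0:ℝ) 1] 0).NeBot := by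
    apply mem_closure_iff_nhdsWithin_neBot.1
    rw [closure_Ioo (zero_ne_one : (0:ℝ) ≠ 1)]
    exact ⟨le_rfl, zero_le_one⟩
  have hkt : Filter.Tendsto k (𝓝[Ioo (0:ℝ) 1] 0) (𝓝 (k 0)) :=
    ((hkcont 0 h0Icc).mono Ioo_subset_Icc_self)
  have hev : ∀ᶠ s in 𝓝[Ioo (0:ℝ) 1] 0, k s < 0 :=
    hkt.eventually (eventually_lt_nhds hk0)
  obtain ⟨s, hks, hsIoo⟩ := (hev.and (Filter.eventually_iff_exists_mem.2
    ⟨Ioo 0 1, self_mem_nhdsWithin, fun x hx => hx⟩)).exists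
  have hsIcc : s ∈ Icc (0:ℝ) 1 := Ioo_subset_Icc_self hsIoo
  have hEs : EE p f u s ≤ k s := by
    have : Fint f s (u s) ≤ Fint f 0 (u s) :=
      Fint_antitone hf hf0 hfr (unonneg hu s hsIcc) h0Icc hsIcc hsIoo.1.le
    simp only [EE, hk]
    linarith
  have h2 := EE_one_nonneg hp hu
  have h3 := EE_mono hp hn hf hf0 hfr hu hsIoo.1 hsIoo.2.le le_rfl
  linarith

end Crit

section GG
variable {n : ℕ} {f : ℝ → ℝ → ℝ} {u : ℝ → ℝ}

lemma GG_hasDeriv (hn : 1 ≤ n) (hu : RadialSol p n f u) {r : ℝ} (hr : r ∈ Ioo (0:ℝ) 1) :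
    HasDerivAt (fun t : ℝ => t^(n-1) * phi p (du u t)) (-(r^(n-1) * f r (u r))) r := by
  have h1 : HasDerivAt (fun t : ℝ => t^(n-1)) (((n-1:ℕ):ℝ) * r^(n-1-1)) r :=
    hasDerivAt_pow (n-1) r
  have h2 := hasDerivAt_psi hu hr
  have h3 : HasDerivAt (fun t : ℝ => t^(n-1) * phi p (du u t)) _ r := h1.mul h2
  convert h3 using 1
  rw [deriv_psi_eq hu hr]
  have key : ((n-1:ℕ):ℝ) * r^(n-1-1) = ((n:ℝ)-1)/r * r^(n-1) := by
    rcases eq_or_lt_of_le hn with heq | h2n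
    · rw [← heq]; norm_num
    · have hne : r ≠ 0 := ne_of_gt hr.1
      have hpow : r^(n-1-1) * r = r^(n-1) := by
        rw [← pow_succ]
        congr 1
        omega
      have hcast : ((n - 1 : ℕ) : ℝ) = (n:ℝ) - 1 := by
        push_cast [Nat.cast_sub hn]
        ring
      rw [hcast]
      field_simp
      rw [← hpow]
      ring
  rw [key]
  field_simp
  ring

lemma GG_contOn (hp : 1 < p) (hu : RadialSol p n f u) :
    ContinuousOn (fun t : ℝ => t^(n-1) * phi p (du u t)) (Icc (0:ℝ) 1) :=
  (continuousOn_pow (n-1)).mul ((continuous_phi hp).comp_continuousOn (Ucont hu))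

lemma du_neg (hp : 1 < p) (hn : 1 ≤ n)
    (hf : ContDiffOn ℝ 1 (fun z : ℝ × ℝ => f z.1 z.2) (Set.Icc 0 1 ×ˢ Set.Ici 0))
    (hu : RadialSol p n f u) {r₀ : ℝ} (h : r₀ ∈ Ioo (0:ℝ) 1)
    (hgpos : ∀ r ∈ Ico (0:ℝ) r₀, 0 < f r (u r)) : du u r₀ < 0 := by
  have hanti : StrictAntiOn (fun t : ℝ => t^(n-1) * phi p (du u t)) (Icc 0 r₀) := by
    apply strictAntiOn_of_deriv_neg (convex_Icc 0 r₀)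
      ((GG_contOn hp hu).mono (Icc_subset_Icc le_rfl h.2.le))
    rw [interior_Icc]
    intro r hr
    have hrIoo : r ∈ Ioo (0:ℝ) 1 := ⟨hr.1, lt_trans hr.2 h.2⟩
    rw [(GG_hasDeriv hn hu hrIoo).deriv]
    have h1 : (0:ℝ) < r^(n-1) := pow_pos hr.1 _
    have h2 := hgpos r ⟨hr.1.le, hr.2⟩
    nlinarith
  have h0m : (0:ℝ) ∈ Icc (0:ℝ) r₀ := ⟨le_rfl, h.1.le⟩
  have hrm : r₀ ∈ Icc (0:ℝ) r₀ := ⟨h.1.le, le_rfl⟩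
  have := hanti h0m hrm h.1
  simp only [] at this
  rw [hu.bc0, phi_zero, mul_zero] at this
  have hpow : (0:ℝ) < r₀^(n-1) := pow_pos h.1 _
  rw [← phi_neg_iff hp]
  nlinarith

lemma u_lt_after (hp : 1 < p) (hn : 1 ≤ n)
    (hf : ContDiffOn ℝ 1 (fun z : ℝ × ℝ => f z.1 z.2) (Set.Icc 0 1 ×ˢ Set.Ici 0))
    (hf0 : ∀ r ∈ Set.Icc (0:ℝ) 1, f r 0 = 0)
    (hfr : ∀ r ∈ Set.Icc (0:ℝ) 1, ∀ v > (0:ℝ), deriv (fun s => f s v) r ≤ 0)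
    (h22 : ∀ r ∈ Set.Icc (0:ℝ) 1, ∀ v > (0:ℝ), 0 < v * deriv (f r) v - (p - 1) * f r v)
    (hu : RadialSol p n f u) {a : ℝ} (haIoo : a ∈ Ioo (0:ℝ) 1)
    (hga : f a (u a) ≤ 0) (hUa : du u a < 0) :
    ∀ r ∈ Ioc a 1, u r < u a := by
  have haIcc : a ∈ Icc (0:ℝ) 1 := Ioo_subset_Icc_self haIoo
  have hua : 0 < u a := hu.pos a ⟨haIoo.1.le, haIoo.2⟩
  by_contra hcon
  push_neg at hcon
  obtain ⟨t, ht, hut⟩ := hcon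
  have hta : t < 1 := by
    rcases eq_or_lt_of_le ht.2 with rfl | h
    · rw [hu.bc1] at hut; linarith
    · exact h
  -- local strict decrease from hUa
  have hd := hasDerivAt_u hu haIoo
  have hslope := hasDerivAt_iff_tendsto_slope.1 hd
  have hev : ∀ᶠ r in 𝓝[>] a, slope u a r < 0 := by
    have h := (tendsto_order.1 hslope).2 0 hUa
    exact h.filter_mono (nhdsWithin_mono a (fun x hx => ne_of_gt hx))
  obtain ⟨V, hV, hVsub⟩ := Filter.eventually_iff_exists_mem.1 hev
  obtain ⟨b', hb', hIoo⟩ := mem_nhdsGT_iff_exists_Ioo_subset.1 hV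
  have hdec : ∀ r ∈ Ioo a b', u r < u a := by
    intro r hr
    have := hVsub r (hIoo hr)
    rw [slope_def_field] at this
    have hra : 0 < r - a := by linarith [hr.1]
    have := (div_lt_iff₀ hra).1 this
    linarith
  set m := (a + min b' t)/2 with hm
  have hminat : a < min b' t := lt_min hb' ht.1
  have hmlt : a < m ∧ m < min b' t := by constructor <;> (rw [hm]; linarith)
  have hmt : m < t := lt_of_lt_of_le hmlt.2 (min_le_right _ _)
  have humlt : u m < u a := hdec m ⟨hmlt.1, lt_of_lt_of_le hmlt.2 (min_le_left _ _)⟩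
  set T := Icc m 1 ∩ u ⁻¹' (Ici (u a)) with hT
  have hTclosed : IsClosed T := by
    apply ContinuousOn.preimage_isClosed_of_isClosed
      ((ucont hu).mono (Icc_subset_Icc (by linarith [haIoo.1]) le_rfl))
      isClosed_Icc isClosed_Ici
  have htT : t ∈ T := ⟨⟨hmt.le, ht.2⟩, hut⟩
  have hTbdd : BddBelow T := ⟨m, fun x hx => hx.1.1⟩
  set τ := sInf T with hτ
  have hτT : τ ∈ T := hTclosed.csInf_mem ⟨t, htT⟩ hTbdd
  have hτm : m ≤ τ := hτT.1.1
  have huτ : u a ≤ u τ := hτT.2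
  have hτ1 : τ < 1 := by
    rcases eq_or_lt_of_le hτT.1.2 with heq | h
    · rw [heq, hu.bc1] at huτ; linarith
    · exact h
  have haτ : a < τ := lt_of_lt_of_le hmlt.1 hτm
  -- u < u a on (a, τ)
  have hbetween : ∀ r ∈ Ioo a τ, u r < u a := by
    intro r hr
    rcases lt_or_ge r (min b' t) with hcase | hcase
    · exact hdec r ⟨hr.1, lt_of_lt_of_le hcase (min_le_left _ _)⟩
    · have hrm : m ≤ r := le_trans hmlt.2.le hcase
      by_contra hge
      push_neg at hge
      have : r ∈ T := ⟨⟨hrm, by linarith [hτ1, hr.2]⟩, hge⟩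
      have := csInf_le hTbdd this
      rw [← hτ] at this
      linarith [hr.2]
  -- min point on [a, τ]
  obtain ⟨ξ, hξmem, hξmin⟩ := isCompact_Icc.exists_isMinOn (nonempty_Icc.2 haτ.le)
    ((ucont hu).mono (Icc_subset_Icc haIoo.1.le hτ1.le))
  have hmid : (a+τ)/2 ∈ Ioo a τ := ⟨by linarith, by linarith⟩
  have hmidIcc : (a+τ)/2 ∈ Icc a τ := Ioo_subset_Icc_self hmid
  have huξa : u ξ < u a := lt_of_le_of_lt (hξmin hmidIcc) (hbetween _ hmid)
  have hξa : a < ξ := by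
    rcases eq_or_lt_of_le hξmem.1 with heq | h
    · rw [← heq] at huξa; linarith
    · exact h
  have hξτ : ξ < τ := by
    rcases eq_or_lt_of_le hξmem.2 with heq | h
    · rw [heq] at huξa; linarith
    · exact h
  have hξIoo : ξ ∈ Ioo (0:ℝ) 1 := ⟨lt_trans haIoo.1 hξa, lt_of_lt_of_le hξτ hτ1.le⟩
  have hnbhd : Icc a τ ∈ 𝓝 ξ := Icc_mem_nhds hξa hξτ
  have hloc : IsLocalMin u ξ := hξmin.isLocalMin hnbhd
  have hderiv0 : du u ξ = 0 := by
    rw [du, derivWithin_of_mem_nhds (Icc_mem_nhds hξIoo.1 hξIoo.2)]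
    exact hloc.deriv_eq_zero
  have huξpos : 0 < u ξ := hu.pos ξ ⟨hξIoo.1.le, hξIoo.2⟩
  have hgξ : f ξ (u ξ) ≤ 0 := by
    have h1 : f ξ (u ξ) ≤ f a (u ξ) :=
      f_antitone hf hf0 hfr huξpos.le haIcc (Ioo_subset_Icc_self hξIoo) hξa.le
    have h2 : f a (u ξ) < 0 := f_neg_below hp hf h22 haIcc hga huξpos huξa
    linarith
  exact no_crit hp hn hf hf0 hfr h22 hu hξIoo hderiv0 hgξ

end GG


/-- Lemma 2.3: `f(r,u(r))` changes sign at most once on `(0,1)`. -/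
theorem stmt1 (p : ℝ) (hp : 1 < p) (n : ℕ) (hn : 1 ≤ n)
    (f : ℝ → ℝ → ℝ)
    (hf : ContDiffOn ℝ 1 (fun z : ℝ × ℝ => f z.1 z.2) (Set.Icc 0 1 ×ˢ Set.Ici 0))
    (hf0 : ∀ r ∈ Set.Icc (0:ℝ) 1, f r 0 = 0)
    (hfr : ∀ r ∈ Set.Icc (0:ℝ) 1, ∀ v > (0:ℝ), deriv (fun s => f s v) r ≤ 0)
    (h22 : ∀ r ∈ Set.Icc (0:ℝ) 1, ∀ v > (0:ℝ),
      0 < v * deriv (f r) v - (p - 1) * f r v)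
    (u : ℝ → ℝ) (hu : RadialSol p n f u) :
    ∃ r₂ ∈ Set.Ioc (0:ℝ) 1,
      (∀ r ∈ Set.Ico (0:ℝ) r₂, 0 < f r (u r)) ∧
      (r₂ < 1 → ∀ r ∈ Set.Ioo r₂ 1, f r (u r) < 0) := by

  by_cases hall : ∀ r ∈ Ico (0:ℝ) 1, 0 < f r (u r)
  · exact ⟨1, ⟨one_pos, le_rfl⟩, fun r hr => hall r hr,
      fun h => absurd h (lt_irrefl 1)⟩
  · push_neg at hall
    obtain ⟨r', hr', hg'⟩ := hall
    set S := Icc (0:ℝ) 1 ∩ (fun r => f r (u r)) ⁻¹' (Iic 0) with hS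
    have hScl : IsClosed S :=
      (gcont hf hu).preimage_isClosed_of_isClosed isClosed_Icc isClosed_Iic
    have hSne : S.Nonempty := ⟨r', ⟨⟨hr'.1, hr'.2.le⟩, hg'⟩⟩
    have hSbdd : BddBelow S := ⟨0, fun x hx => hx.1.1⟩
    set r₀ := sInf S with hr₀
    have hr₀S : r₀ ∈ S := hScl.csInf_mem hSne hSbdd
    have h01 : r₀ ∈ Icc (0:ℝ) 1 := hr₀S.1
    have hg₀ : f r₀ (u r₀) ≤ 0 := hr₀S.2
    have hr₀le : r₀ ≤ r' := csInf_le hSbdd ⟨⟨hr'.1, hr'.2.le⟩, hg'⟩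
    have hr₀1 : r₀ < 1 := lt_of_le_of_lt hr₀le hr'.2
    have hgpos : ∀ r ∈ Ico (0:ℝ) r₀, 0 < f r (u r) := by
      intro r hr
      by_contra hc
      push_neg at hc
      have hmem : r ∈ S := ⟨⟨hr.1, le_trans hr.2.le h01.2⟩, hc⟩
      have := csInf_le hSbdd hmem
      rw [← hr₀] at this
      linarith [hr.2]
    have hr₀pos : 0 < r₀ := by
      rcases eq_or_lt_of_le h01.1 with heq | h
      · exfalso
        have := g0_pos hp hn hf hf0 hfr h22 hu
        rw [← heq] at hg₀
        linarith
      · exact h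
    have hIoo : r₀ ∈ Ioo (0:ℝ) 1 := ⟨hr₀pos, hr₀1⟩
    have hUneg := du_neg hp hn hf hu hIoo hgpos
    have hlt := u_lt_after hp hn hf hf0 hfr h22 hu hIoo hg₀ hUneg
    refine ⟨r₀, ⟨hr₀pos, h01.2⟩, hgpos, fun _ r hr => ?_⟩
    have hrIcc : r ∈ Icc (0:ℝ) 1 := ⟨le_trans h01.1 hr.1.le, hr.2.le⟩
    have hur : u r < u r₀ := hlt r ⟨hr.1, hr.2.le⟩
    have hurpos : 0 < u r := hu.pos r ⟨hrIcc.1, hr.2⟩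
    have h1 : f r (u r) ≤ f r₀ (u r) :=
      f_antitone hf hf0 hfr hurpos.le h01 hrIcc hr.1.le
    have h2 : f r₀ (u r) < 0 := f_neg_below hp hf h22 h01 hg₀ hurpos hur
    linarith
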